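/- Let ℓ ≥ 1, let p be an integer, and let D be a finset of ZMod ℓ which is an (ℓ, k, λ)-difference set with λ < k, fixed under multiplication by p (the image of D under x ↦ p·x equals D). Then for s ∈ ZMod ℓ, the shift D + s (image of D under x ↦ x + s) is fixed under multiplication by p if and only if (p − 1)·s = 0 in ZMod ℓ. Consequently, the number of s ∈ ZMod ℓ for which D + s is fixed under multiplication by p equals gcd(p − 1, ℓ). -/

import Mathlib

lemma card_ann (n : ℕ) [NeZero n] (m : ℤ) :
    Nat.card {s : ZMod n // (m : ZMod n) * s = 0} = Int.gcd m n := by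
  set c : ZMod n := (m : ZMod n) with hc
  set g := Nat.gcd n m.natAbs with hgdef
  let f : ZMod n →+ ZMod n := AddMonoidHom.mulLeft c
  have hrange : f.range = AddSubgroup.zmultiples c := by
    ext x
    constructor
    · rintro ⟨s, rfl⟩
      refine ⟨(s.val : ℤ), ?_⟩
      simp [f, zsmul_eq_mul, mul_comm, ZMod.intCast_cast, ZMod.natCast_val]
    · rintro ⟨k, rfl⟩
      exact ⟨(k : ZMod n), by simp [f, zsmul_eq_mul, mul_comm]⟩
  have horder : addOrderOf c = n / g := by
    rcases Int.natAbs_eq m with h | h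
    · have h1 : c = ((m.natAbs : ℕ) : ZMod n) :=
        calc c = (((m.natAbs : ℕ) : ℤ) : ZMod n) := by rw [hc, ← h]
        _ = ((m.natAbs : ℕ) : ZMod n) := Int.cast_natCast _
      rw [h1]
      exact ZMod.addOrderOf_coe _ (NeZero.ne n)
    · have h1 : c = -((m.natAbs : ℕ) : ZMod n) := by
        rw [hc]
        conv_lhs => rw [h]
        rw [Int.cast_neg, Int.cast_natCast]
      rw [h1, addOrderOf_neg]
      exact ZMod.addOrderOf_coe _ (NeZero.ne n)
  have hmul : Nat.card (ZMod n) = Nat.card (ZMod n ⧸ f.ker) * Nat.card f.ker :=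
    AddSubgroup.card_eq_card_quotient_mul_card_addSubgroup f.ker
  have hquot : Nat.card (ZMod n ⧸ f.ker) = Nat.card f.range :=
    Nat.card_congr (QuotientAddGroup.quotientKerEquivRange f).toEquiv
  have hr : Nat.card f.range = n / g := by
    rw [hrange, Nat.card_zmultiples, horder]
  have hnpos : 0 < n := Nat.pos_of_ne_zero (NeZero.ne n)
  have hg : g ∣ n := Nat.gcd_dvd_left _ _
  have hgpos : 0 < g := Nat.gcd_pos_of_pos_left _ hnpos
  have hdivpos : 0 < n / g := Nat.div_pos (Nat.le_of_dvd hnpos hg) hgpos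
  have heq : (n / g) * Nat.card f.ker = (n / g) * g := by
    have h1 : Nat.card (ZMod n) = (n / g) * Nat.card f.ker := by
      rw [hmul, hquot, hr]
    rw [Nat.card_zmod] at h1
    have h2 : (n / g) * g = n := Nat.div_mul_cancel hg
    exact (h2.trans h1).symm
  have hker : Nat.card f.ker = g := Nat.eq_of_mul_eq_mul_left hdivpos heq
  have : Nat.card {s : ZMod n // c * s = 0} = Nat.card f.ker := by
    apply Nat.card_congr
    exact Equiv.subtypeEquivRight fun x => by
      simp [f, AddMonoidHom.mem_ker]
  rw [this, hker, Int.gcd]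
  exact Nat.gcd_comm _ _

/-- For a nontrivial `(ℓ, k, λ)`-difference set `D` in `ZMod ℓ` fixed under multiplication
by `p`, a shift `D + s` is fixed under multiplication by `p` iff `(p - 1)·s = 0`; hence the
number of such shifts is `gcd(p - 1, ℓ)`. -/
theorem stmt_10 (ℓ k lam : ℕ) (hℓ : 1 ≤ ℓ) (p : ℤ) (D : Finset (ZMod ℓ))
    (hcard : D.card = k) (hlam : lam < k)
    (hdiff : ∀ α : ZMod ℓ, α ≠ 0 →
      ((D ×ˢ D).filter (fun xy => xy.1 - xy.2 = α)).card = lam)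
    (hfrob : D.image (fun x => (p : ZMod ℓ) * x) = D) :
    (∀ s : ZMod ℓ,
      (D.image (fun x => x + s)).image (fun x => (p : ZMod ℓ) * x) =
          D.image (fun x => x + s) ↔
        ((p : ZMod ℓ) - 1) * s = 0) ∧
    Nat.card {s : ZMod ℓ //
        (D.image (fun x => x + s)).image (fun x => (p : ZMod ℓ) * x) =
          D.image (fun x => x + s)} = Int.gcd (p - 1) ℓ := by
  have : NeZero ℓ := ⟨by omega⟩
  -- D + t = D implies t = 0
  have key : ∀ t : ZMod ℓ, D.image (fun x => x + t) = D → t = 0 := by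
    intro t hDt
    by_contra ht
    have hsub : ∀ y ∈ D, y + t ∈ D := by
      intro y hy
      rw [← hDt]
      exact Finset.mem_image_of_mem _ hy
    have hle : D.card ≤ ((D ×ˢ D).filter (fun xy => xy.1 - xy.2 = t)).card := by
      apply Finset.card_le_card_of_injOn (fun y => (y + t, y))
      · intro y hy
        simp only [Finset.coe_filter, Set.mem_setOf_eq, Finset.mem_filter, Finset.mem_product]
        exact ⟨⟨hsub y hy, hy⟩, by ring⟩
      · intro a _ b _ h
        exact (Prod.mk.injEq _ _ _ _ ▸ h).2
    rw [hdiff t ht, hcard] at hle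
    omega
  -- shift equality iff
  have shift_iff : ∀ a b : ZMod ℓ,
      D.image (fun x => x + a) = D.image (fun x => x + b) ↔ a = b := by
    intro a b
    constructor
    · intro h
      have h2 : D.image (fun x => x + (a - b)) = D := by
        have : (D.image (fun x => x + a)).image (fun x => x + (-b)) =
            (D.image (fun x => x + b)).image (fun x => x + (-b)) := by rw [h]
        rw [Finset.image_image, Finset.image_image] at this
        simpa [Function.comp, sub_eq_add_neg, add_assoc] using this
      exact sub_eq_zero.mp (key _ h2)
    · rintro rfl; rfl
  have main : ∀ s : ZMod ℓ,
      (D.image (fun x => x + s)).image (fun x => (p : ZMod ℓ) * x) =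
          D.image (fun x => x + s) ↔ ((p : ZMod ℓ) - 1) * s = 0 := by
    intro s
    have hL : (D.image (fun x => x + s)).image (fun x => (p : ZMod ℓ) * x) =
        D.image (fun x => x + (p : ZMod ℓ) * s) := by
      rw [Finset.image_image]
      have : ((fun x => (p : ZMod ℓ) * x) ∘ (fun x => x + s)) =
          (fun x => x + (p : ZMod ℓ) * s) ∘ (fun x => (p : ZMod ℓ) * x) := by
        funext x; simp [Function.comp, mul_add]
      rw [this, ← Finset.image_image, hfrob]
    rw [hL, shift_iff]
    constructor
    · intro h; rw [sub_mul, one_mul, h, sub_self]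
    · intro h
      have : (p : ZMod ℓ) * s - s = 0 := by rw [← h]; ring
      rw [sub_eq_zero] at this; exact this
  refine ⟨main, ?_⟩
  have : Nat.card {s : ZMod ℓ //
      (D.image (fun x => x + s)).image (fun x => (p : ZMod ℓ) * x) =
        D.image (fun x => x + s)} =
      Nat.card {s : ZMod ℓ // (((p - 1 : ℤ)) : ZMod ℓ) * s = 0} := by
    apply Nat.card_congr
    apply Equiv.subtypeEquivRight
    intro s
    rw [main s]
    push_cast
    rfl
  rw [this, card_ann]
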